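/- Let α > 0 and set halt = gen = 1/(e^α + 1). Then the Sequence-CLDP length distribution satisfies α-length-indistinguishability: for all natural numbers n, m, ℓ, P(n,ℓ) ≤ exp(α·|n − m|)·P(m,ℓ). -/

import Mathlib

/-- With the symmetric parameter choice `halt = gen = 1/(e^α + 1)`, the
Sequence-CLDP length distribution satisfies α-length-indistinguishability. -/
theorem seq_cldp_length_indistinguishability_symmetric (α halt gen : ℝ) (hα : 0 < α)
    (hhalt : halt = 1 / (Real.exp α + 1)) (hgen : gen = 1 / (Real.exp α + 1))
    (P : ℕ → ℕ → ℝ)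
    (hP : ∀ n ℓ, P n ℓ = if ℓ < n then halt * (1 - halt) ^ ℓ
      else (1 - halt) ^ n * (1 - gen) * gen ^ (ℓ - n))
    (n m ℓ : ℕ) :
    P n ℓ ≤ Real.exp (α * |(n : ℝ) - (m : ℝ)|) * P m ℓ := by
  set E := Real.exp α with hE
  have hE1 : 1 < E := by
    rw [hE]
    exact Real.one_lt_exp_iff.mpr hα
  have hEpos : 0 < E := lt_trans one_pos hE1
  have hppos : 0 < halt := by rw [hhalt]; positivity
  have h1p : 1 - halt = E * halt := by
    rw [hhalt]
    field_simp
    ring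
  have hgeq : gen = halt := by rw [hgen, hhalt]
  have hform : ∀ k l : ℕ, P k l = E ^ (if l < k then l else k + 1) * halt ^ (l + 1) := by
    intro k l
    rw [hP, hgeq]
    split_ifs with h
    · rw [h1p]; ring
    · rw [h1p]
      have hkl : k ≤ l := le_of_not_gt h
      have hl : l + 1 = (k + 1) + (l - k) := by omega
      rw [hl, pow_add, pow_add]
      ring
  have habs : |(n : ℝ) - (m : ℝ)| = ((max n m - min n m : ℕ) : ℝ) := by
    rcases le_total n m with h | h
    · rw [max_eq_right h, min_eq_left h, Nat.cast_sub h, abs_sub_comm,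
        abs_of_nonneg (by simp [Nat.cast_le.mpr h] : (0:ℝ) ≤ (m:ℝ) - (n:ℝ))]
    · rw [max_eq_left h, min_eq_right h, Nat.cast_sub h,
        abs_of_nonneg (by simp [Nat.cast_le.mpr h] : (0:ℝ) ≤ (n:ℝ) - (m:ℝ))]
  rw [hform n ℓ, hform m ℓ, habs, mul_comm α, Real.exp_nat_mul, ← hE, ← mul_assoc,
    ← pow_add]
  have hexp : (if ℓ < n then ℓ else n + 1) ≤ (max n m - min n m) + (if ℓ < m then ℓ else m + 1) := by
    split_ifs <;> omega
  exact mul_le_mul_of_nonneg_right (pow_le_pow_right₀ hE1.le hexp) (by positivity)
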